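/- Explicit Y-eigenvectors generating the one-parameter family of (2n+1)-dimensional modules: let R be a commutative ring in which q^{1/4} is invertible, set q^{1/2} = (q^{1/4})², t^{1/2} = (q^{1/4})^{−1−2n} for an integer n ≥ 0, and let Y = π∘T be the operator of the polynomial representation for these parameters. Then for each ε ∈ {+1, −1}, the Laurent polynomial P_ε = X^{−n}·∏_{m=−n}^{n}(X + ε·q^{1/4 + m/2}) satisfies Y(P_ε) = q^{−1/4}·P_ε. -/

import Mathlib

open LaurentPolynomial

section Aux

variable {R : Type*} [CommRing R]

/-- The `R`-algebra endomorphism of `R[T;T⁻¹]` sending `T m` to `q^m • T (-m)`. -/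
noncomputable def piAlg (R : Type*) [CommRing R] (q : Rˣ) :
    LaurentPolynomial R →ₐ[R] LaurentPolynomial R :=
  AddMonoidAlgebra.lift R _ ℤ
    { toFun := fun m => ((q ^ (Multiplicative.toAdd m) : Rˣ) : R) • T (-(Multiplicative.toAdd m))
      map_one' := by simp
      map_mul' := fun a b => by
        show ((q ^ (Multiplicative.toAdd a + Multiplicative.toAdd b) : Rˣ) : R) •
            T (-(Multiplicative.toAdd a + Multiplicative.toAdd b)) = _
        rw [zpow_add, Units.val_mul, neg_add, T_add, smul_mul_smul_comm] }

theorem piAlg_T (q : Rˣ) (m : ℤ) :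
    piAlg R q (T m) = ((q ^ m : Rˣ) : R) • T (-m) := by
  have : (T m : R[T;T⁻¹]) = AddMonoidAlgebra.single m 1 := rfl
  rw [this, piAlg, AddMonoidAlgebra.lift_single, one_smul]
  rfl

theorem linearMap_eq_algHom (L : Module.End R (LaurentPolynomial R))
    (ψ : LaurentPolynomial R →ₐ[R] LaurentPolynomial R)
    (h : ∀ m : ℤ, L (T m) = ψ (T m)) : ∀ f, L f = ψ f := by
  intro f
  have : L = ψ.toLinearMap := by
    refine AddMonoidAlgebra.lhom_ext' fun a => LinearMap.ext fun b => ?_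
    show L (AddMonoidAlgebra.single a b) = ψ.toLinearMap (AddMonoidAlgebra.single a b)
    have hs : (AddMonoidAlgebra.single a b : R[T;T⁻¹]) = b • T a := by
      rw [single_eq_C_mul_T, C_eq_algebraMap, ← Algebra.smul_def]
    rw [hs, map_smul, map_smul]
    exact congrArg (fun z => b • z) (h a)
  rw [this]; rfl

theorem T_sq_sub_one_cancel {x y : R[T;T⁻¹]}
    (h : (T 2 - 1) * x = (T 2 - 1) * y) : x = y := by
  have key : ∀ f : R[T;T⁻¹], (T 2 - 1) * f = 0 → f = 0 := by
    intro f
    induction f using LaurentPolynomial.induction_on_mul_T with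
    | @mul_T f n =>
      intro hf
      have h2 : ((T 2 - 1) * Polynomial.toLaurent f) * T (-(n:ℤ)) = 0 := by
        rw [← hf]; ring
      have h3 : (T 2 - 1) * Polynomial.toLaurent f = 0 :=
        ((isUnit_T (-(n:ℤ))).mul_left_eq_zero).mp h2
      have h4 : Polynomial.toLaurent ((Polynomial.X ^ 2 - 1) * f) = 0 := by
        rw [map_mul, map_sub, map_one, map_pow, Polynomial.toLaurent_X, T_pow,
          show ((2:ℕ):ℤ) * 1 = 2 by norm_num]
        exact h3
      have h5 : (Polynomial.X ^ 2 - 1 : Polynomial R) * f = 0 :=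
        Polynomial.toLaurent_injective (by simpa using h4)
      have hm : (Polynomial.X ^ 2 - 1 : Polynomial R).Monic := by
        simpa using Polynomial.monic_X_pow_sub_C (1 : R) (two_ne_zero)
      have h6 : (Polynomial.X ^ 2 - 1 : Polynomial R) * f =
          (Polynomial.X ^ 2 - 1 : Polynomial R) * 0 := by rw [mul_zero]; exact h5
      have h7 : f = 0 := hm.isRegular.left h6
      rw [h7, map_zero, zero_mul]
  have : (T 2 - 1) * (x - y) = 0 := by rw [mul_sub, h, sub_self]
  exact sub_eq_zero.mp (key _ this)

theorem units_prod_zpow {ι : Type*} (s : Finset ι) (u : Rˣ) (f : ι → ℤ) :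
    ∏ i ∈ s, ((u ^ f i : Rˣ) : R) = ((u ^ (∑ i ∈ s, f i) : Rˣ) : R) := by
  induction s using Finset.cons_induction with
  | empty => simp
  | cons a s ha ih => simp [Finset.prod_cons, Finset.sum_cons, ih, zpow_add]

theorem C_mul_eq_smul (r : R) (f : R[T;T⁻¹]) : C r * f = r • f := by
  rw [C_eq_algebraMap, ← Algebra.smul_def]

end Aux

/-- Explicit `Y`-eigenvectors generating the one-parameter family of
`(2n+1)`-dimensional modules: with `q^{1/2} = (q^{1/4})²`,
`t^{1/2} = (q^{1/4})^{−1−2n}`, and `Y = π ∘ T` the operator of the polynomial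
representation, for each `ε ∈ {+1, −1}` the Laurent polynomial
`P_ε = X^{−n}·∏_{m=−n}^{n}(X + ε·q^{1/4+m/2})` satisfies `Y(P_ε) = q^{−1/4}·P_ε`.
Here `s`, `π` are the `R`-linear operators with `s(Xᵐ) = X⁻ᵐ`,
`π(Xᵐ) = q^{m/2}X⁻ᵐ`, and `TT` is the Demazure–Lusztig operator for
`t^{1/2} = (q4)^{−1−2n}`, encoded by `hT`. -/
theorem stmt3 (R : Type*) [CommRing R] (q4 : Rˣ) (n : ℕ)
    (s π TT : Module.End R (LaurentPolynomial R))
    (hs : ∀ m : ℤ, s (T m) = T (-m))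
    (hπ : ∀ m : ℤ, π (T m) = (((q4 ^ 2) ^ m : Rˣ) : R) • T (-m))
    (hT : ∀ f : LaurentPolynomial R,
      (T 2 - 1) * (TT f - ((q4 ^ (-(1 + 2 * (n : ℤ))) : Rˣ) : R) • s f) =
        (((q4 ^ (-(1 + 2 * (n : ℤ))) : Rˣ) : R) -
          ((q4 ^ (1 + 2 * (n : ℤ)) : Rˣ) : R)) • (s f - f)) :
    ∀ ε : R, ε = 1 ∨ ε = -1 →
      π (TT (T (-(n : ℤ)) *
          ∏ m ∈ Finset.Icc (-(n : ℤ)) (n : ℤ),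
            (T 1 + C (ε * ((q4 ^ (1 + 2 * m) : Rˣ) : R))))) =
        ((q4⁻¹ : Rˣ) : R) • (T (-(n : ℤ)) *
          ∏ m ∈ Finset.Icc (-(n : ℤ)) (n : ℤ),
            (T 1 + C (ε * ((q4 ^ (1 + 2 * m) : Rˣ) : R)))) := by
  intro ε hε
  have hε2 : ε * ε = 1 := by rcases hε with h | h <;> rw [h] <;> ring
  -- abbreviations
  set F : ℤ → R[T;T⁻¹] := fun m => T 1 + C (ε * ((q4 ^ (1 + 2 * m) : Rˣ) : R)) with hF
  set S : Finset ℤ := Finset.Icc (-(n : ℤ)) (n : ℤ) with hSdef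
  set Q : R[T;T⁻¹] := ∏ m ∈ Finset.Icc (-(n : ℤ)) ((n : ℤ) - 1), F m with hQ
  set P : R[T;T⁻¹] := T (-(n : ℤ)) * ∏ m ∈ S, F m with hP
  -- basic coefficient arithmetic
  have hv : ∀ a b : ℤ, ((q4 ^ a : Rˣ) : R) * ((q4 ^ b : Rˣ) : R) = ((q4 ^ (a+b) : Rˣ) : R) := by
    intro a b; rw [zpow_add]; simp
  have hq : ∀ a b : ℤ, a = b → ((q4 ^ a : Rˣ) : R) = ((q4 ^ b : Rˣ) : R) := by
    intro a b h; rw [h]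
  -- cardinal and sum facts
  have hcard : S.card = 2*n+1 := by rw [hSdef, Int.card_Icc]; omega
  have hsum0 : ∑ m ∈ S, m = 0 := by
    have h1 : ∑ m ∈ S, m = ∑ m ∈ S, (-m) := by
      rw [hSdef]
      apply Finset.sum_nbij' (i := fun m => -m) (j := fun m => -m)
      · intro a ha; simp only [Finset.mem_Icc] at *; omega
      · intro a ha; simp only [Finset.mem_Icc] at *; omega
      · intro a _; omega
      · intro a _; omega
      · intro a _; omega
    rw [Finset.sum_neg_distrib] at h1
    omega
  have hsum : ∑ m ∈ S, (1 + 2*m) = 2*(n:ℤ)+1 := by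
    rw [Finset.sum_add_distrib, Finset.sum_const, ← Finset.mul_sum, hsum0, mul_zero, add_zero,
      hcard]
    simp only [nsmul_eq_mul]
    push_cast
    ring
  have hεpow : ε ^ S.card = ε := by
    rw [hcard, pow_succ, pow_mul, pow_two, hε2, one_pow, one_mul]
  -- factorization of a single factor
  have hfac : ∀ j m : ℤ,
      ((q4 ^ (2*j) : Rˣ) : R) • T (-1) + C (ε * ((q4 ^ (1 + 2 * m) : Rˣ) : R)) =
        C (ε * ((q4 ^ (1 + 2 * m) : Rˣ) : R)) * (T (-1) * F (j - 1 - m)) := by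
    intro j m
    have e1 : (T (-1) : R[T;T⁻¹]) * F (j - 1 - m)
        = 1 + C (ε * ((q4 ^ (1 + 2 * (j - 1 - m)) : Rˣ) : R)) * T (-1) := by
      rw [hF]
      simp only []
      rw [mul_add, ← T_add, neg_add_cancel, T_zero, mul_comm (T (-1))]
    rw [e1, mul_add, mul_one, ← mul_assoc, ← map_mul, C_mul_eq_smul, add_comm]
    congr 2
    calc ((q4 ^ (2*j) : Rˣ) : R)
        = (ε*ε) * (((q4 ^ (1 + 2*m) : Rˣ) : R) * ((q4 ^ (1 + 2*(j-1-m)) : Rˣ) : R)) := by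
          rw [hε2, one_mul, hv]
          exact hq _ _ (by ring)
      _ = ε * ((q4 ^ (1 + 2 * m) : Rˣ) : R) * (ε * ((q4 ^ (1 + 2 * (j-1-m)) : Rˣ) : R)) := by
          ring
  -- product formula
  have hprod : ∀ j : ℤ,
      ∏ m ∈ S, (((q4 ^ (2*j) : Rˣ) : R) • T (-1) + C (ε * ((q4 ^ (1 + 2 * m) : Rˣ) : R))) =
        (ε * ((q4 ^ (2*(n:ℤ)+1) : Rˣ) : R)) •
          (T (-(2*(n:ℤ)+1)) * ∏ m ∈ S, F (j - 1 - m)) := by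
    intro j
    calc ∏ m ∈ S, (((q4 ^ (2*j) : Rˣ) : R) • T (-1) + C (ε * ((q4 ^ (1 + 2 * m) : Rˣ) : R)))
        = ∏ m ∈ S, (C (ε * ((q4 ^ (1 + 2 * m) : Rˣ) : R)) * (T (-1) * F (j - 1 - m))) :=
          Finset.prod_congr rfl fun m _ => hfac j m
      _ = (∏ m ∈ S, C (ε * ((q4 ^ (1 + 2 * m) : Rˣ) : R))) *
            ((∏ m ∈ S, (T (-1) : R[T;T⁻¹])) * ∏ m ∈ S, F (j - 1 - m)) := by
          rw [Finset.prod_mul_distrib, Finset.prod_mul_distrib]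
      _ = C (ε * ((q4 ^ (2*(n:ℤ)+1) : Rˣ) : R)) *
            (T (-(2*(n:ℤ)+1)) * ∏ m ∈ S, F (j - 1 - m)) := by
          congr 2
          · rw [← map_prod]
            congr 1
            rw [Finset.prod_mul_distrib, Finset.prod_const, hεpow,
              units_prod_zpow S q4 (fun m => 1 + 2*m), hsum]
          · rw [Finset.prod_const, T_pow, hcard]
            congr 1
            push_cast
            ring
      _ = (ε * ((q4 ^ (2*(n:ℤ)+1) : Rˣ) : R)) •
            (T (-(2*(n:ℤ)+1)) * ∏ m ∈ S, F (j - 1 - m)) := C_mul_eq_smul _ _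
  -- s and π as algebra maps
  have hone : ∀ m : ℤ, (((1:Rˣ) ^ m : Rˣ) : R) = 1 := by
    intro m; rw [one_zpow, Units.val_one]
  have hs' : ∀ f, s f = piAlg R 1 f :=
    linearMap_eq_algHom s (piAlg R 1) (fun m => by rw [hs, piAlg_T, hone, one_smul])
  have hπ' : ∀ f, π f = piAlg R (q4^2) f :=
    linearMap_eq_algHom π (piAlg R (q4^2)) (fun m => by rw [hπ, piAlg_T])
  have hCpi : ∀ (qq : Rˣ) (r : R), piAlg R qq (C r) = C r := by
    intro qq r
    rw [C_eq_algebraMap, AlgHom.commutes]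
  -- splitting and reindexing products
  have hsplitTop : ∏ m ∈ S, F m = Q * F (n:ℤ) := by
    rw [hSdef, hQ,
      show Finset.Icc (-(n:ℤ)) (n:ℤ) = insert (n:ℤ) (Finset.Icc (-(n:ℤ)) ((n:ℤ)-1)) by
        ext x; simp only [Finset.mem_insert, Finset.mem_Icc]; omega,
      Finset.prod_insert (by simp only [Finset.mem_Icc]; omega), mul_comm]
  have hreindex0 : ∏ m ∈ S, F (0 - 1 - m) = F (-(n:ℤ)-1) * Q := by
    have h1 : ∏ m ∈ S, F (0 - 1 - m) = ∏ m ∈ Finset.Icc (-(n:ℤ)-1) ((n:ℤ)-1), F m := by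
      rw [hSdef]
      apply Finset.prod_nbij' (i := fun m => 0 - 1 - m) (j := fun m => 0 - 1 - m)
      · intro a ha; simp only [Finset.mem_Icc] at *; omega
      · intro a ha; simp only [Finset.mem_Icc] at *; omega
      · intro a _; omega
      · intro a _; omega
      · intro a _; rfl
    rw [h1,
      show Finset.Icc (-(n:ℤ)-1) ((n:ℤ)-1) = insert (-(n:ℤ)-1) (Finset.Icc (-(n:ℤ)) ((n:ℤ)-1)) by
        ext x; simp only [Finset.mem_insert, Finset.mem_Icc]; omega,
      Finset.prod_insert (by simp only [Finset.mem_Icc]; omega), hQ]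
  have hreindex1 : ∏ m ∈ S, F (1 - 1 - m) = ∏ m ∈ S, F m := by
    rw [hSdef]
    apply Finset.prod_nbij' (i := fun m => -m) (j := fun m => -m)
    · intro a ha; simp only [Finset.mem_Icc] at *; omega
    · intro a ha; simp only [Finset.mem_Icc] at *; omega
    · intro a _; omega
    · intro a _; omega
    · intro a _; exact congrArg F (by ring)
  -- generic expansion of a product with a single factor
  have eGen : ∀ k m : ℤ, T (k-1) * F m =
      T k + (ε * ((q4 ^ (1 + 2*m) : Rˣ) : R)) • T (k-1) := by
    intro k m
    rw [hF]
    simp only []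
    rw [mul_add, ← T_add, show k - 1 + 1 = k by ring, mul_comm (T (k-1)), C_mul_eq_smul]
  have eA := eGen (-(n:ℤ)) (-(n:ℤ)-1)
  have eB : T (-(n:ℤ)) * F (n:ℤ) =
      T (-(n:ℤ)+1) + (ε * ((q4 ^ (1 + 2*(n:ℤ)) : Rˣ) : R)) • T (-(n:ℤ)) := by
    have h := eGen (-(n:ℤ)+1) (n:ℤ)
    rw [show -(n:ℤ)+1-1 = -(n:ℤ) by ring] at h
    exact h
  -- action of s on P
  have hsP : s P = (ε * ((q4 ^ (2*(n:ℤ)+1) : Rˣ) : R)) •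
      (T (-(n:ℤ)-1) * (F (-(n:ℤ)-1) * Q)) := by
    have hFim : ∀ m : ℤ, piAlg R 1 (F m) =
        ((q4 ^ (2*(0:ℤ)) : Rˣ) : R) • T (-1) + C (ε * ((q4 ^ (1 + 2 * m) : Rˣ) : R)) := by
      intro m
      rw [hF]
      simp only []
      rw [map_add, piAlg_T, hCpi, hone, one_smul, mul_zero, zpow_zero, Units.val_one, one_smul]
    rw [hs', hP, map_mul, map_prod, piAlg_T, hone, one_smul,
      Finset.prod_congr rfl fun m _ => hFim m, hprod 0, hreindex0, mul_smul_comm]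
    congr 1
    rw [← mul_assoc, ← T_add, show -(-(n:ℤ)) + -(2*(n:ℤ)+1) = -(n:ℤ)-1 by ring]
  -- the key divisibility identity
  have hkey : s P - P = (T 2 - 1) * (-(T (-(n:ℤ)-1) * Q)) := by
    have hco : (ε * ((q4 ^ (2*(n:ℤ)+1) : Rˣ) : R)) *
        (ε * ((q4 ^ (1 + 2*(-(n:ℤ)-1)) : Rˣ) : R)) = 1 := by
      calc ε * ((q4 ^ (2*(n:ℤ)+1) : Rˣ) : R) * (ε * ((q4 ^ (1 + 2*(-(n:ℤ)-1)) : Rˣ) : R))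
          = (ε*ε) * (((q4 ^ (2*(n:ℤ)+1) : Rˣ) : R) * ((q4 ^ (1 + 2*(-(n:ℤ)-1)) : Rˣ) : R)) := by
            ring
        _ = 1 := by rw [hε2, one_mul, hv, hq _ 0 (by ring), zpow_zero, Units.val_one]
    have e3 : (T 2 : R[T;T⁻¹]) * T (-(n:ℤ)-1) = T (-(n:ℤ)+1) := by
      rw [← T_add]; congr 1; ring
    rw [hsP, hP, hsplitTop,
      show T (-(n:ℤ)-1) * (F (-(n:ℤ)-1) * Q) = (T (-(n:ℤ)-1) * F (-(n:ℤ)-1)) * Q by ring,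
      eA,
      show T (-(n:ℤ)) * (Q * F (n:ℤ)) = (T (-(n:ℤ)) * F (n:ℤ)) * Q by ring,
      eB, add_mul, smul_add, smul_mul_assoc, smul_smul, hco, one_smul, ← e3]
    simp only [← C_mul_eq_smul]
    ring
  -- explicit formula for TT P via cancellation
  have hTT : TT P = ((q4 ^ (-(1+2*(n:ℤ))) : Rˣ) : R) • s P +
      (((q4 ^ (1+2*(n:ℤ)) : Rˣ) : R) - ((q4 ^ (-(1+2*(n:ℤ))) : Rˣ) : R)) •
        (T (-(n:ℤ)-1) * Q) := by
    have h1 := hT P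
    rw [hkey] at h1
    have h2 : (T 2 - 1) * (TT P - ((q4 ^ (-(1+2*(n:ℤ))) : Rˣ) : R) • s P) =
        (T 2 - 1) * ((((q4 ^ (-(1+2*(n:ℤ))) : Rˣ) : R) - ((q4 ^ (1+2*(n:ℤ)) : Rˣ) : R)) •
          (-(T (-(n:ℤ)-1) * Q))) := by
      rw [h1]
      exact (mul_smul_comm _ _ _).symm
    have h3 := T_sq_sub_one_cancel h2
    rw [smul_neg, ← neg_smul, neg_sub, sub_eq_iff_eq_add] at h3
    rw [h3, add_comm]
  -- TT P = ε • (T (-1) * P)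
  have hTTP : TT P = ε • (T (-1) * P) := by
    have hco2 : ((q4 ^ (-(1+2*(n:ℤ))) : Rˣ) : R) * (ε * ((q4 ^ (2*(n:ℤ)+1) : Rˣ) : R)) = ε := by
      calc ((q4 ^ (-(1+2*(n:ℤ))) : Rˣ) : R) * (ε * ((q4 ^ (2*(n:ℤ)+1) : Rˣ) : R))
          = ε * (((q4 ^ (-(1+2*(n:ℤ))) : Rˣ) : R) * ((q4 ^ (2*(n:ℤ)+1) : Rˣ) : R)) := by ring
        _ = ε := by rw [hv, hq _ 0 (by ring), zpow_zero, Units.val_one, mul_one]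
    rw [hTT, hsP, smul_smul, hco2,
      show T (-(n:ℤ)-1) * (F (-(n:ℤ)-1) * Q) = (T (-(n:ℤ)-1) * F (-(n:ℤ)-1)) * Q by ring,
      eA, hP, hsplitTop,
      show (T (-1) : R[T;T⁻¹]) * (T (-(n:ℤ)) * (Q * F (n:ℤ)))
        = (T (-1) * T (-(n:ℤ)) * F (n:ℤ)) * Q by ring,
      ← T_add, show (-1 + -(n:ℤ)) = -(n:ℤ)-1 by ring,
      eGen (-(n:ℤ)) (n:ℤ)]
    have h1 : ε * (ε * ((q4 ^ (1 + 2*(-(n:ℤ)-1)) : Rˣ) : R)) =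
        ((q4 ^ (-(1+2*(n:ℤ))) : Rˣ) : R) := by
      rw [← mul_assoc, hε2, one_mul]; exact hq _ _ (by ring)
    rw [add_mul, add_mul, smul_add, smul_add, smul_mul_assoc, smul_mul_assoc,
      smul_smul, smul_smul, h1, add_assoc, ← add_smul]
    congr 2
    rw [← mul_assoc, hε2, one_mul]
    ring
  -- apply π
  have hsq : ∀ e : ℤ, (((q4^2 : Rˣ) ^ e : Rˣ) : R) = ((q4 ^ (2*e) : Rˣ) : R) := by
    intro e
    rw [← zpow_natCast q4 2, ← zpow_mul]
    norm_num
  have hFim2 : ∀ m : ℤ, piAlg R (q4^2) (F m) =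
      ((q4 ^ (2*(1:ℤ)) : Rˣ) : R) • T (-1) + C (ε * ((q4 ^ (1 + 2 * m) : Rˣ) : R)) := by
    intro m
    rw [hF]
    simp only []
    rw [map_add, piAlg_T, hCpi, zpow_one,
      show (q4 ^ (2*(1:ℤ)) : Rˣ) = q4 ^ 2 from by rw [← zpow_natCast q4 2]; norm_num]
  have hTmul : (T (1:ℤ) : R[T;T⁻¹]) * (T (n:ℤ) * (T (-(2*(n:ℤ)+1)) * ∏ m ∈ S, F m))
      = T (-(n:ℤ)) * ∏ m ∈ S, F m := by
    rw [show (T (1:ℤ) : R[T;T⁻¹]) * (T (n:ℤ) * (T (-(2*(n:ℤ)+1)) * ∏ m ∈ S, F m))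
        = ((T (1:ℤ) * T (n:ℤ)) * T (-(2*(n:ℤ)+1))) * ∏ m ∈ S, F m by ring,
      ← T_add, ← T_add, show (1 + (n:ℤ)) + -(2*(n:ℤ)+1) = -(n:ℤ) by ring]
  rw [hTTP, map_smul, hπ' _, map_mul, piAlg_T, hP, map_mul, map_prod, piAlg_T,
    Finset.prod_congr rfl fun m _ => hFim2 m, hprod 1, hreindex1]
  simp only [smul_mul_assoc, mul_smul_comm, smul_smul, neg_neg]
  rw [hTmul]
  congr 1
  rw [hsq, hsq]
  rw [show ε * (ε * ((q4 ^ (2 * (n:ℤ) + 1) : Rˣ) : R) * ((q4 ^ (2 * -(n:ℤ)) : Rˣ) : R) *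
        ((q4 ^ (2 * (-1:ℤ)) : Rˣ) : R))
      = (ε * ε) * (((q4 ^ (2 * (n:ℤ) + 1) : Rˣ) : R) * (((q4 ^ (2 * -(n:ℤ)) : Rˣ) : R) *
        ((q4 ^ (2 * (-1:ℤ)) : Rˣ) : R))) from by ring,
    hε2, one_mul, hv, hv, hq _ (-1) (by ring), zpow_neg_one]
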